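/- For every graph H, the map sending each ordered pair (u,v) (with uv an edge of H) to the unordered edge {u,v} is a locally bijective homomorphism from L*(H) to the line graph L(H). In particular, L*(H) is a 2-lift of L(H). -/

import Mathlib

open SimpleGraph

/-- Locally bijective homomorphism between simple graphs. -/
def IsLBH {V W : Type*} (G : SimpleGraph V) (H : SimpleGraph W) (psi : V → W) : Prop :=
  (∀ ⦃u v⦄, G.Adj u v → H.Adj (psi u) (psi v)) ∧
    ∀ v, Set.BijOn psi (G.neighborSet v) (H.neighborSet (psi v))

/-- Vertex set of the oriented line graph of `H`: ordered pairs forming an edge of `H`. -/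
def OLV {V : Type*} (H : SimpleGraph V) : Type _ := {p : V × V // H.Adj p.1 p.2}

/-- Arc relation of the oriented line graph `L⃗(H)`. -/
def OLArc {V : Type*} (H : SimpleGraph V) (a b : OLV H) : Prop :=
  a.1.2 = b.1.1 ∧ a.1.1 ≠ b.1.2

/-- The underlying undirected graph `L*(H)` of the oriented line graph of `H`. -/
def Lstar {V : Type*} (H : SimpleGraph V) : SimpleGraph (OLV H) :=
  SimpleGraph.fromRel (OLArc H)

lemma lstar_adj {V : Type*} (H : SimpleGraph V) (a b : OLV H) :
    (Lstar H).Adj a b ↔ a ≠ b ∧ (OLArc H a b ∨ OLArc H b a) := Iff.rfl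

set_option linter.unnecessarySeqFocus false

theorem stmt1 {V : Type*} [Fintype V] [DecidableEq V] (H : SimpleGraph V)
    [DecidableRel H.Adj] :
    IsLBH (Lstar H) H.lineGraph
      (fun a => (⟨s(a.1.1, a.1.2), H.mem_edgeSet.mpr a.2⟩ : H.edgeSet)) ∧
      Nat.card (OLV H) = 2 * Nat.card H.edgeSet := by
  set psi : OLV H → H.edgeSet :=
    fun a => (⟨s(a.1.1, a.1.2), H.mem_edgeSet.mpr a.2⟩ : H.edgeSet) with hpsi
  have hom : ∀ ⦃a b : OLV H⦄, (Lstar H).Adj a b → H.lineGraph.Adj (psi a) (psi b) := by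
    rintro ⟨⟨u, v⟩, huv⟩ ⟨⟨x, y⟩, hxy⟩ ⟨hne, h⟩
    simp only [OLArc] at h
    rw [lineGraph_adj_iff_exists]
    constructor
    · intro hEq
      have hEq' : s(u, v) = s(x, y) := Subtype.ext_iff.mp hEq
      rw [Sym2.eq_iff] at hEq'
      clear hEq
      rcases h with ⟨h1, h2⟩ | ⟨h1, h2⟩ <;> simp_all <;>
        rcases hEq' with ⟨rfl, rfl⟩ | ⟨rfl, rfl⟩ <;> simp_all [H.ne_of_adj huv]
    · rcases h with ⟨h1, h2⟩ | ⟨h1, h2⟩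
      · exact ⟨v, by change v ∈ s(u, v); simp, by change v ∈ s(x, y); simp [h1]⟩
      · exact ⟨u, by change u ∈ s(u, v); simp, by change u ∈ s(x, y); simp [← h1]⟩
  refine ⟨⟨hom, ?_⟩, ?_⟩
  · rintro ⟨⟨u, v⟩, huv⟩
    refine ⟨fun b hb => hom hb, ?_, ?_⟩
    · rintro ⟨⟨x, y⟩, hxy⟩ hb ⟨⟨x', y'⟩, hxy'⟩ hb' hEq
      replace hb := (lstar_adj H _ _).mp hb
      replace hb' := (lstar_adj H _ _).mp hb'
      have hEq' : s(x, y) = s(x', y') := Subtype.ext_iff.mp hEq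
      rw [Sym2.eq_iff] at hEq'
      clear hEq
      obtain ⟨-, h⟩ := hb
      obtain ⟨-, h'⟩ := hb'
      apply Subtype.ext
      rcases h with ⟨h1, h2⟩ | ⟨h1, h2⟩ <;> rcases h' with ⟨h1', h2'⟩ | ⟨h1', h2'⟩ <;>
        simp_all <;> rcases hEq' with ⟨rfl, rfl⟩ | ⟨rfl, rfl⟩ <;>
        simp_all [H.ne_of_adj hxy, H.ne_of_adj hxy', H.ne_of_adj huv]
    · rintro ⟨f, hf⟩ hmem
      simp only [mem_neighborSet, lineGraph_adj_iff_exists] at hmem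
      obtain ⟨hne, w, hw2, hw1⟩ := hmem
      set q := Sym2.Mem.other hw1 with hq
      have hspec : s(w, q) = f := Sym2.other_spec hw1
      have hwq : H.Adj w q := H.mem_edgeSet.mp (hspec ▸ hf)
      have hfe : s(u, v) ≠ f := fun h => hne (Subtype.ext h)
      change w ∈ s(u, v) at hw2
      simp only [Sym2.mem_iff] at hw2
      rcases hw2 with rfl | rfl
      · -- w = u, f = s(u, q)
        have hqv : q ≠ v := by
          rintro rfl; exact hfe hspec
        refine ⟨⟨(q, w), hwq.symm⟩, ?_, Subtype.ext (Sym2.eq_swap.trans hspec)⟩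
        refine ⟨?_, Or.inr ⟨rfl, hqv⟩⟩
        intro hEq
        have := congrArg (fun z : OLV H => z.1.2) hEq
        exact H.ne_of_adj huv this.symm
      · -- w = v, f = s(v, q)
        have hqu : q ≠ u := by
          rintro rfl; exact hfe (Sym2.eq_swap.trans hspec)
        refine ⟨⟨(w, q), hwq⟩, ?_, Subtype.ext hspec⟩
        refine ⟨?_, Or.inl ⟨rfl, fun h => hqu h.symm⟩⟩
        intro hEq
        have := congrArg (fun z : OLV H => z.1.1) hEq
        exact H.ne_of_adj huv this
  · have e1 : OLV H ≃ H.Dart :=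
      { toFun := fun a => ⟨a.1, a.2⟩
        invFun := fun d => ⟨d.toProd, d.adj⟩
        left_inv := fun a => rfl
        right_inv := fun d => rfl }
    rw [Nat.card_eq_of_bijective _ e1.bijective, Nat.card_eq_fintype_card,
      Nat.card_eq_fintype_card, dart_card_eq_twice_card_edges, edgeFinset_card]
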